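/- Let (A, B, C) be a recollement of abelian categories in which A, B and C all have enough projectives and enough injectives, and suppose i^* and i^! are exact. If T is a pseudo cluster tilting subcategory of B such that every object of j_*(j^*(T)) lies in T and every object of i_*(i^*(T)) lies in T, then j^*(T) is a pseudo cluster tilting subcategory of C. -/
import Mathlib


open CategoryTheory CategoryTheory.Limits CategoryTheory.Abelian ZeroObject

universe v u

namespace PaperRecollement

/-- The `k`-th Ext group of two objects in an abelian category,
as a type (it carries an `AddCommGroup` structure). -/
noncomputable def ExtGrp {D : Type u} [Category.{v} D] [Abelian D] (X Y : D) (k : ℕ) :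
    Type (max u v) :=
  letI : HasDerivedCategory.{max u v} D := HasDerivedCategory.standard D
  letI : HasExt.{max u v} D := hasExt_of_hasDerivedCategory D
  Abelian.Ext X Y k

noncomputable instance {D : Type u} [Category.{v} D] [Abelian D] (X Y : D) (k : ℕ) :
    AddCommGroup (ExtGrp X Y k) :=
  letI : HasDerivedCategory.{max u v} D := HasDerivedCategory.standard D
  letI : HasExt.{max u v} D := hasExt_of_hasDerivedCategory D
  inferInstanceAs (AddCommGroup (Abelian.Ext X Y k))

/-- `Ext^k(X, Y) = 0`. -/
def ExtVanish {D : Type u} [Category.{v} D] [Abelian D] (X Y : D) (k : ℕ) : Prop :=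
  Subsingleton (ExtGrp X Y k)

/-- A functor between abelian categories is exact if it is additive and preserves
short exact sequences. -/
structure IsExactFunctor {A : Type u} {B : Type u} [Category.{v} A] [Category.{v} B]
    [Abelian A] [Abelian B] (F : A ⥤ B) : Prop where
  additive : F.Additive
  preserves_shortExact : ∀ ⦃X Y Z : A⦄ (f : X ⟶ Y) (g : Y ⟶ Z) (w : f ≫ g = 0)
    (w' : F.map f ≫ F.map g = 0),
    (ShortComplex.mk f g w).ShortExact → (ShortComplex.mk (F.map f) (F.map g) w').ShortExact

/-- A recollement of abelian categories. -/
structure Recollement (A B C : Type u) [Category.{v} A] [Category.{v} B] [Category.{v} C]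
    [Abelian A] [Abelian B] [Abelian C] where
  /-- `i_* : A ⥤ B` -/
  iStar : A ⥤ B
  /-- `i^* : B ⥤ A` -/
  iUStar : B ⥤ A
  /-- `i^! : B ⥤ A` -/
  iShriek : B ⥤ A
  /-- `j^* : B ⥤ C` -/
  jUStar : B ⥤ C
  /-- `j_! : C ⥤ B` -/
  jShriek : C ⥤ B
  /-- `j_* : C ⥤ B` -/
  jStar : C ⥤ B
  adj₁ : iUStar ⊣ iStar
  adj₂ : iStar ⊣ iShriek
  adj₃ : jShriek ⊣ jUStar
  adj₄ : jUStar ⊣ jStar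
  iUStar_additive : iUStar.Additive
  iShriek_additive : iShriek.Additive
  jShriek_additive : jShriek.Additive
  jStar_additive : jStar.Additive
  iStar_full : iStar.Full
  iStar_faithful : iStar.Faithful
  jShriek_full : jShriek.Full
  jShriek_faithful : jShriek.Faithful
  jStar_full : jStar.Full
  jStar_faithful : jStar.Faithful
  iStar_exact : IsExactFunctor iStar
  jUStar_exact : IsExactFunctor jUStar
  essIm_iStar_eq_ker_jUStar : ∀ X : B,
    (∃ Y : A, Nonempty (iStar.obj Y ≅ X)) ↔ Nonempty (jUStar.obj X ≅ 0)

variable {D : Type u} [Category.{v} D] [Abelian D]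

/-- `Z^∧_m` : objects with a `Z`-resolution of length `m`. -/
def ResClass (Z : Set D) : ℕ → Set D
  | 0 => {C | ∃ Z₀ ∈ Z, Nonempty (Z₀ ≅ C)}
  | (m + 1) => {C | ∃ (K X : D) (f : K ⟶ X) (g : X ⟶ C) (w : f ≫ g = 0),
      (ShortComplex.mk f g w).ShortExact ∧ X ∈ Z ∧ K ∈ ResClass Z m}

/-- `Z^∨_m` : objects with a `Z`-coresolution of length `m`. -/
def CoresClass (Z : Set D) : ℕ → Set D
  | 0 => {C | ∃ Z₀ ∈ Z, Nonempty (C ≅ Z₀)}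
  | (m + 1) => {C | ∃ (X K : D) (f : C ⟶ X) (g : X ⟶ K) (w : f ≫ g = 0),
      (ShortComplex.mk f g w).ShortExact ∧ X ∈ Z ∧ K ∈ CoresClass Z m}

/-- Left `n`-cotorsion pair. -/
structure IsLeftNCotorsionPair (n : ℕ) (𝒳 𝒴 : Set D) : Prop where
  closed_summands : ∀ ⦃X X' : D⦄, X ∈ 𝒳 →
    (∃ (s : X' ⟶ X) (r : X ⟶ X'), s ≫ r = 𝟙 X') → X' ∈ 𝒳
  ext_vanish : ∀ ⦃X Y : D⦄, X ∈ 𝒳 → Y ∈ 𝒴 → ∀ k, 1 ≤ k → k ≤ n → ExtVanish X Y k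
  exists_ses : ∀ C : D, ∃ (K X : D) (f : K ⟶ X) (g : X ⟶ C) (w : f ≫ g = 0),
    (ShortComplex.mk f g w).ShortExact ∧ X ∈ 𝒳 ∧ K ∈ ResClass 𝒴 (n - 1)

/-- Right `n`-cotorsion pair. -/
structure IsRightNCotorsionPair (n : ℕ) (𝒳 𝒴 : Set D) : Prop where
  closed_summands : ∀ ⦃Y Y' : D⦄, Y ∈ 𝒴 →
    (∃ (s : Y' ⟶ Y) (r : Y ⟶ Y'), s ≫ r = 𝟙 Y') → Y' ∈ 𝒴
  ext_vanish : ∀ ⦃X Y : D⦄, X ∈ 𝒳 → Y ∈ 𝒴 → ∀ k, 1 ≤ k → k ≤ n → ExtVanish X Y k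
  exists_ses : ∀ C : D, ∃ (Y Z : D) (f : C ⟶ Y) (g : Y ⟶ Z) (w : f ≫ g = 0),
    (ShortComplex.mk f g w).ShortExact ∧ Y ∈ 𝒴 ∧ Z ∈ CoresClass 𝒳 (n - 1)

/-- `n`-cotorsion pair. -/
def IsNCotorsionPair (n : ℕ) (𝒳 𝒴 : Set D) : Prop :=
  IsLeftNCotorsionPair n 𝒳 𝒴 ∧ IsRightNCotorsionPair n 𝒳 𝒴

/-- Hereditary `n`-cotorsion pair. -/
def IsHereditaryNCotorsionPair (n : ℕ) (𝒳 𝒴 : Set D) : Prop :=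
  IsNCotorsionPair n 𝒳 𝒴 ∧ ∀ ⦃X Y : D⦄, X ∈ 𝒳 → Y ∈ 𝒴 → ExtVanish X Y (n + 1)

/-- The image class of a class of objects under a functor: objects isomorphic to
`F.obj X` for some `X ∈ S`. -/
def imgClass {A B : Type u} [Category.{v} A] [Category.{v} B] (F : A ⥤ B) (S : Set A) :
    Set B :=
  {Y | ∃ X ∈ S, Nonempty (F.obj X ≅ Y)}

/-- A pseudo cluster tilting subcategory of an abelian category, given as a class of
objects: a full additive iso-closed subcategory admitting the two approximation
short exact sequences. -/
structure IsPseudoClusterTilting (T : Set D) : Prop where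
  iso_closed : ∀ ⦃X Y : D⦄, X ∈ T → Nonempty (X ≅ Y) → Y ∈ T
  zero_mem : (0 : D) ∈ T
  biprod_mem : ∀ ⦃X Y : D⦄, X ∈ T → Y ∈ T → (X ⊞ Y) ∈ T
  left_approx : ∀ C : D, ∃ (T₁ T₂ : D) (f : C ⟶ T₁) (g : T₁ ⟶ T₂) (w : f ≫ g = 0),
    (ShortComplex.mk f g w).ShortExact ∧ T₁ ∈ T ∧ T₂ ∈ T ∧
      ∀ T' ∈ T, ∀ h : C ⟶ T', ∃ k : T₁ ⟶ T', f ≫ k = h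
  right_approx : ∀ C : D, ∃ (T₃ T₄ : D) (f : T₃ ⟶ T₄) (g : T₄ ⟶ C) (w : f ≫ g = 0),
    (ShortComplex.mk f g w).ShortExact ∧ T₃ ∈ T ∧ T₄ ∈ T ∧
      ∀ T' ∈ T, ∀ h : T' ⟶ C, ∃ k : T' ⟶ T₄, k ≫ g = h


variable {A B C : Type u} [Category.{v} A] [Category.{v} B] [Category.{v} C]
  [Abelian A] [Abelian B] [Abelian C]

/-- `j^*` of a pseudo cluster tilting subcategory is pseudo cluster tilting. -/
theorem pseudoClusterTilting_jUStar
    [EnoughProjectives A] [EnoughInjectives A] [EnoughProjectives B] [EnoughInjectives B]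
    [EnoughProjectives C] [EnoughInjectives C]
    (R : Recollement A B C)
    (hiU : IsExactFunctor R.iUStar) (hiS : IsExactFunctor R.iShriek)
    (T : Set B) (hT : IsPseudoClusterTilting T)
    (hjT : imgClass R.jStar (imgClass R.jUStar T) ⊆ T)
    (hiT : imgClass R.iStar (imgClass R.iUStar T) ⊆ T) :
    IsPseudoClusterTilting (imgClass R.jUStar T) := by
  haveI := R.jStar_full
  haveI := R.jStar_faithful
  haveI := R.jUStar_exact.additive
  haveI : PreservesBinaryBiproducts R.jUStar :=
    preservesBinaryBiproducts_of_preservesBiproducts _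
  let ε := R.adj₄.counit
  have hε : ∀ X : C, IsIso (ε.app X) := fun X => inferInstance
  -- mapping a SES in B through jUStar
  have mapSES : ∀ ⦃X Y Z : B⦄ (f : X ⟶ Y) (g : Y ⟶ Z) (w : f ≫ g = 0),
      (ShortComplex.mk f g w).ShortExact →
      ∃ (w' : R.jUStar.map f ≫ R.jUStar.map g = 0),
        (ShortComplex.mk (R.jUStar.map f) (R.jUStar.map g) w').ShortExact := by
    intro X Y Z f g w hw
    have w' : R.jUStar.map f ≫ R.jUStar.map g = 0 := by
      rw [← R.jUStar.map_comp, w, R.jUStar.map_zero]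
    exact ⟨w', R.jUStar_exact.preserves_shortExact f g w w' hw⟩
  constructor
  · rintro X Y ⟨X', hX', ⟨e⟩⟩ ⟨e2⟩
    exact ⟨X', hX', ⟨e ≪≫ e2⟩⟩
  · exact ⟨0, hT.zero_mem, ⟨R.jUStar.mapZeroObject⟩⟩
  · rintro X Y ⟨X', hX', ⟨e⟩⟩ ⟨Y', hY', ⟨e'⟩⟩
    exact ⟨X' ⊞ Y', hT.biprod_mem hX' hY',
      ⟨R.jUStar.mapBiprod X' Y' ≪≫ biprod.mapIso e e'⟩⟩
  · -- left approximation
    intro C'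
    obtain ⟨T₁, T₂, f, g, w, hse, hT₁, hT₂, happrox⟩ := hT.left_approx (R.jStar.obj C')
    obtain ⟨w₀, hse₀⟩ := mapSES f g w hse
    refine ⟨R.jUStar.obj T₁, R.jUStar.obj T₂,
      inv (ε.app C') ≫ R.jUStar.map f, R.jUStar.map g,
      by rw [Category.assoc, w₀, comp_zero], ?_, ⟨T₁, hT₁, ⟨Iso.refl _⟩⟩,
      ⟨T₂, hT₂, ⟨Iso.refl _⟩⟩, ?_⟩
    · exact ShortComplex.shortExact_of_iso
        (ShortComplex.isoMk (S₁ := ShortComplex.mk _ _ w₀)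
          (asIso (ε.app C')) (Iso.refl _) (Iso.refl _) (by simp) (by simp)) hse₀
    · intro T' hT' h
      have hmem : R.jStar.obj T' ∈ T := hjT ⟨T', hT', ⟨Iso.refl _⟩⟩
      obtain ⟨k, hk⟩ := happrox _ hmem (R.jStar.map h)
      refine ⟨R.jUStar.map k ≫ ε.app T', ?_⟩
      have hnat := ε.naturality h
      dsimp at hnat
      rw [Category.assoc, ← Functor.map_comp_assoc, hk, hnat, IsIso.inv_hom_id_assoc]
  · -- right approximation
    intro C'
    obtain ⟨T₃, T₄, f, g, w, hse, hT₃, hT₄, happrox⟩ := hT.right_approx (R.jStar.obj C')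
    obtain ⟨w₀, hse₀⟩ := mapSES f g w hse
    refine ⟨R.jUStar.obj T₃, R.jUStar.obj T₄,
      R.jUStar.map f, R.jUStar.map g ≫ ε.app C',
      by rw [← Category.assoc, w₀, zero_comp], ?_, ⟨T₃, hT₃, ⟨Iso.refl _⟩⟩,
      ⟨T₄, hT₄, ⟨Iso.refl _⟩⟩, ?_⟩
    · exact ShortComplex.shortExact_of_iso
        (ShortComplex.isoMk (S₁ := ShortComplex.mk _ _ w₀)
          (Iso.refl _) (Iso.refl _) (asIso (ε.app C')) (by simp) (by simp)) hse₀
    · intro T' hT' h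
      have hmem : R.jStar.obj T' ∈ T := hjT ⟨T', hT', ⟨Iso.refl _⟩⟩
      obtain ⟨k, hk⟩ := happrox _ hmem (R.jStar.map h)
      refine ⟨inv (ε.app T') ≫ R.jUStar.map k, ?_⟩
      have hnat := ε.naturality h
      dsimp at hnat
      rw [Category.assoc, ← Functor.map_comp_assoc, hk, hnat, IsIso.inv_hom_id_assoc]
end PaperRecollement
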